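/- Let (X,d) be a metric space with d(x,y) ≤ 1 for all x,y, let B > 0, set C₁ = max(1, B·e^B), and for x,y ∈ X and a bounded complex Lipschitz function h on X write ⟨l_{x,y}, h⟩ = e^{B·d(x,y)}·h(y) − h(x) and ‖h‖_Lip = ‖h‖∞ + |h|_ℓ. Then: (i) for all x, y ∈ X, |⟨l_{x,y}, h⟩| ≤ C₁·‖h‖_Lip·d(x,y); and (ii) for all x, y, x', y' ∈ X, Re( conj(⟨l_{x,y}, 1 + h⟩)·⟨l_{x',y'}, 1 + h⟩ ) ≥ (B² − 2·C₁²·‖h‖_Lip − C₁²·‖h‖_Lip²)·d(x,y)·d(x',y'), where 1 denotes the constant function 1. -/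

import Mathlib

open Complex

/-- Sup norm of a real-valued function. -/
noncomputable def supN {X : Type*} (u : X → ℝ) : ℝ := sSup (Set.range fun x => |u x|)

/-- Best Lipschitz constant of a real-valued function with respect to the distance d. -/
noncomputable def lipN {X : Type*} (d : X → X → ℝ) (u : X → ℝ) : ℝ :=
  sInf {c : ℝ | 0 ≤ c ∧ ∀ x y, |u x - u y| ≤ c * d x y}

/-- Sup norm of a complex-valued function. -/
noncomputable def supNC {X : Type*} (u : X → ℂ) : ℝ :=
  sSup (Set.range fun x => ‖u x‖)

/-- Best Lipschitz constant of a complex-valued function with respect to the distance d. -/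
noncomputable def lipNC {X : Type*} (d : X → X → ℝ) (u : X → ℂ) : ℝ :=
  sInf {c : ℝ | 0 ≤ c ∧ ∀ x y, ‖u x - u y‖ ≤ c * d x y}

/-- The real Birkhoff cone of bounded Lipschitz functions with exp(B d(x,y)) u(y) ≥ u(x). -/
def coneR {X : Type*} (d : X → X → ℝ) (B : ℝ) : Set (X → ℝ) :=
  {u | (∃ c : ℝ, 0 ≤ c ∧ ∀ x y, |u x - u y| ≤ c * d x y) ∧ (∃ M : ℝ, ∀ x, |u x| ≤ M) ∧
    ∀ x y, u x ≤ Real.exp (B * d x y) * u y}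

/-- The real Birkhoff cone viewed inside complex-valued functions. -/
def coneRC {X : Type*} (d : X → X → ℝ) (B : ℝ) : Set (X → ℂ) :=
  {w | ∃ u ∈ coneR d B, w = fun x => ((u x : ℝ) : ℂ)}

/-- The complex cone generated by a real cone. -/
def complexCone {V : Type*} [AddCommGroup V] [Module ℂ V] (Cr : Set V) : Set V :=
  {x | x ≠ 0 ∧ ∃ c : ℂ, c ≠ 0 ∧ ∃ u ∈ Cr, ∃ v ∈ Cr, x = c • (u + Complex.I • v)}

/-- estimates on the functionals l_{x,y}: a bound |⟨l_{x,y},h⟩| ≤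
C₁ ‖h‖_Lip d(x,y), and the quantitative lower bound showing the constant function 1 is in the
interior of the complex cone. -/
theorem lxy_estimates_and_one_interior
    {X : Type*} [Nonempty X] (d : X → X → ℝ)
    (hd_eq : ∀ x y, d x y = 0 ↔ x = y)
    (hd_symm : ∀ x y, d x y = d y x)
    (hd_tri : ∀ x y z, d x z ≤ d x y + d y z)
    (hd_le : ∀ x y, d x y ≤ 1)
    (B : ℝ) (hB : 0 < B)
    (C₁ : ℝ) (hC₁ : C₁ = max 1 (B * Real.exp B))
    (h : X → ℂ)
    (hhLip : ∃ c : ℝ, 0 ≤ c ∧ ∀ x y, ‖h x - h y‖ ≤ c * d x y)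
    (hhBdd : ∃ M : ℝ, ∀ x, ‖h x‖ ≤ M) :
    (∀ x y : X,
      ‖((Real.exp (B * d x y) : ℝ) : ℂ) * h y - h x‖ ≤
        C₁ * (supNC h + lipNC d h) * d x y) ∧
    ∀ x y x' y' : X,
      (B ^ 2 - 2 * C₁ ^ 2 * (supNC h + lipNC d h) - C₁ ^ 2 * (supNC h + lipNC d h) ^ 2) *
          (d x y * d x' y') ≤
        ((starRingEnd ℂ)
            (((Real.exp (B * d x y) : ℝ) : ℂ) * (1 + h y) - (1 + h x)) *
          (((Real.exp (B * d x' y') : ℝ) : ℂ) * (1 + h y') - (1 + h x'))).re := by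

  -- basic facts about d
  have hd0 : ∀ x y, 0 ≤ d x y := by
    intro x y
    have h1 : d x x ≤ d x y + d y x := hd_tri x y x
    have h2 : d x x = 0 := (hd_eq x x).mpr rfl
    have h3 : d y x = d x y := hd_symm y x
    linarith
  set K := supNC h + lipNC d h with hKdef
  have hsup : ∀ x, ‖h x‖ ≤ supNC h := by
    intro x
    obtain ⟨M, hM⟩ := hhBdd
    exact le_csSup ⟨M, by rintro r ⟨z, rfl⟩; exact hM z⟩ ⟨x, rfl⟩
  have hlip0 : 0 ≤ lipNC d h := le_csInf hhLip (fun c hc => hc.1)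
  have hsup0 : 0 ≤ supNC h :=
    (norm_nonneg _).trans (hsup (Classical.arbitrary X))
  have hK0 : 0 ≤ K := add_nonneg hsup0 hlip0
  have hlip : ∀ x y, ‖h x - h y‖ ≤ lipNC d h * d x y := by
    intro x y
    rcases eq_or_lt_of_le (hd0 x y) with hd | hd
    · have hxy : x = y := (hd_eq x y).mp hd.symm
      subst hxy; simp [← hd]
    · have h1 : ‖h x - h y‖ / d x y ≤ lipNC d h := by
        apply le_csInf hhLip
        intro c hc
        rw [div_le_iff₀ hd]
        exact hc.2 x y
      calc ‖h x - h y‖ = ‖h x - h y‖ / d x y * d x y := by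
            field_simp
        _ ≤ lipNC d h * d x y := mul_le_mul_of_nonneg_right h1 hd.le
  have hC₁1 : (1:ℝ) ≤ C₁ := by rw [hC₁]; exact le_max_left _ _
  have hC₁B : B * Real.exp B ≤ C₁ := by rw [hC₁]; exact le_max_right _ _
  have hC₁0 : (0:ℝ) ≤ C₁ := by linarith
  have hexp_ub : ∀ t : ℝ, 0 ≤ t → t ≤ B → Real.exp t - 1 ≤ t * Real.exp B := by
    intro t ht htB
    have h1 : 1 - t ≤ Real.exp (-t) := by
      have := Real.add_one_le_exp (-t); linarith
    have h2 : Real.exp t * (1 - t) ≤ Real.exp t * Real.exp (-t) :=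
      mul_le_mul_of_nonneg_left h1 (Real.exp_pos t).le
    rw [← Real.exp_add, add_neg_cancel, Real.exp_zero] at h2
    have h3 : Real.exp t ≤ Real.exp B := Real.exp_le_exp.mpr htB
    nlinarith [Real.exp_pos t]
  -- part (i)
  have key1 : ∀ x y : X,
      ‖((Real.exp (B * d x y) : ℝ) : ℂ) * h y - h x‖ ≤ C₁ * K * d x y := by
    intro x y
    have hBd0 : 0 ≤ B * d x y := mul_nonneg hB.le (hd0 x y)
    have hBdB : B * d x y ≤ B := by nlinarith [hd_le x y, hd0 x y]
    have e1 : Real.exp (B * d x y) - 1 ≤ B * d x y * Real.exp B := hexp_ub _ hBd0 hBdB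
    have e0 : (1:ℝ) ≤ Real.exp (B * d x y) := Real.one_le_exp hBd0
    have decomp : ((Real.exp (B * d x y) : ℝ) : ℂ) * h y - h x
        = ((Real.exp (B * d x y) - 1 : ℝ) : ℂ) * h y + (h y - h x) := by
      push_cast; ring
    rw [decomp]
    have step1 : ‖((Real.exp (B * d x y) - 1 : ℝ) : ℂ) * h y + (h y - h x)‖
        ≤ |Real.exp (B * d x y) - 1| * ‖h y‖ + ‖h y - h x‖ := by
      refine (norm_add_le _ _).trans ?_
      rw [norm_mul, Complex.norm_real, Real.norm_eq_abs]
    refine step1.trans ?_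
    rw [_root_.abs_of_nonneg (by linarith : (0:ℝ) ≤ Real.exp (B * d x y) - 1)]
    have b1 : (Real.exp (B * d x y) - 1) * ‖h y‖
        ≤ (B * d x y * Real.exp B) * supNC h :=
      mul_le_mul e1 (hsup y) (norm_nonneg _) (by positivity)
    have b2 : ‖h y - h x‖ ≤ lipNC d h * d x y := by
      have := hlip y x
      rwa [hd_symm y x] at this
    have hd' := hd0 x y
    have b3 : B * Real.exp B * (supNC h * d x y) ≤ C₁ * (supNC h * d x y) :=
      mul_le_mul_of_nonneg_right hC₁B (mul_nonneg hsup0 hd')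
    have b4 : lipNC d h * d x y ≤ C₁ * (lipNC d h * d x y) :=
      le_mul_of_one_le_left (mul_nonneg hlip0 hd') hC₁1
    have e : C₁ * K * d x y = C₁ * (supNC h * d x y) + C₁ * (lipNC d h * d x y) := by
      rw [hKdef]; ring
    have e' : B * d x y * Real.exp B * supNC h = B * Real.exp B * (supNC h * d x y) := by ring
    linarith [b1, b2, b3, b4]
  refine ⟨key1, ?_⟩
  -- part (ii)
  intro x y x' y'
  set d1 := d x y with hd1
  set d2 := d x' y' with hd2
  have hd1' : 0 ≤ d1 := hd0 x y
  have hd2' : 0 ≤ d2 := hd0 x' y'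
  set a : ℝ := Real.exp (B * d1) - 1 with ha
  set a' : ℝ := Real.exp (B * d2) - 1 with ha'
  set z : ℂ := ((Real.exp (B * d1) : ℝ) : ℂ) * h y - h x with hz
  set z' : ℂ := ((Real.exp (B * d2) : ℝ) : ℂ) * h y' - h x' with hz'
  have hzb : ‖z‖ ≤ C₁ * K * d1 := key1 x y
  have hz'b : ‖z'‖ ≤ C₁ * K * d2 := key1 x' y'
  have halb : B * d1 ≤ a := by
    have := Real.add_one_le_exp (B * d1); simp only [ha]; linarith
  have ha'lb : B * d2 ≤ a' := by
    have := Real.add_one_le_exp (B * d2); simp only [ha']; linarith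
  have ha0 : 0 ≤ a := le_trans (mul_nonneg hB.le hd1') halb
  have ha'0 : 0 ≤ a' := le_trans (mul_nonneg hB.le hd2') ha'lb
  have haub : a ≤ C₁ * d1 := by
    have h1 : a ≤ B * d1 * Real.exp B :=
      hexp_ub _ (mul_nonneg hB.le hd1') (by nlinarith [hd_le x y])
    have h2 : B * d1 * Real.exp B = (B * Real.exp B) * d1 := by ring
    rw [h2] at h1
    exact h1.trans (mul_le_mul_of_nonneg_right hC₁B hd1')
  have ha'ub : a' ≤ C₁ * d2 := by
    have h1 : a' ≤ B * d2 * Real.exp B :=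
      hexp_ub _ (mul_nonneg hB.le hd2') (by nlinarith [hd_le x' y'])
    have h2 : B * d2 * Real.exp B = (B * Real.exp B) * d2 := by ring
    rw [h2] at h1
    exact h1.trans (mul_le_mul_of_nonneg_right hC₁B hd2')
  have hw : ((Real.exp (B * d1) : ℝ) : ℂ) * (1 + h y) - (1 + h x) = (a : ℂ) + z := by
    simp only [ha, hz]; push_cast; ring
  have hw' : ((Real.exp (B * d2) : ℝ) : ℂ) * (1 + h y') - (1 + h x') = (a' : ℂ) + z' := by
    simp only [ha', hz']; push_cast; ring
  rw [hw, hw']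
  have hre : ((starRingEnd ℂ) ((a : ℂ) + z) * ((a' : ℂ) + z')).re
      = (a + z.re) * (a' + z'.re) + z.im * z'.im := by
    simp [Complex.mul_re, Complex.conj_re, Complex.conj_im]
  rw [hre]
  have hzre : |z.re| ≤ ‖z‖ := Complex.abs_re_le_norm z
  have hzim : |z.im| ≤ ‖z‖ := Complex.abs_im_le_norm z
  have hz're : |z'.re| ≤ ‖z'‖ := Complex.abs_re_le_norm z'
  have hz'im : |z'.im| ≤ ‖z'‖ := Complex.abs_im_le_norm z'
  have habs0 : 0 ≤ ‖z‖ := norm_nonneg z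
  have habs0' : 0 ≤ ‖z'‖ := norm_nonneg z'
  -- bound each term
  have t1 : B * d1 * (B * d2) ≤ a * a' :=
    mul_le_mul halb ha'lb (mul_nonneg hB.le hd2') ha0
  have t2 : -(C₁ * d1 * (C₁ * K * d2)) ≤ a * z'.re := by
    have hlb : -(‖z'‖) ≤ z'.re := by linarith [neg_abs_le z'.re, hz're]
    have h1 : a * -(‖z'‖) ≤ a * z'.re := mul_le_mul_of_nonneg_left hlb ha0
    have h1' : a * -(‖z'‖) = -(a * ‖z'‖) := by ring
    rw [h1'] at h1
    refine le_trans ?_ h1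
    have h2 : a * ‖z'‖ ≤ C₁ * d1 * (C₁ * K * d2) :=
      mul_le_mul haub hz'b habs0' (by positivity)
    linarith
  have t3 : -(C₁ * d2 * (C₁ * K * d1)) ≤ a' * z.re := by
    have hlb : -(‖z‖) ≤ z.re := by linarith [neg_abs_le z.re, hzre]
    have h1 : a' * -(‖z‖) ≤ a' * z.re := mul_le_mul_of_nonneg_left hlb ha'0
    have h1' : a' * -(‖z‖) = -(a' * ‖z‖) := by ring
    rw [h1'] at h1
    refine le_trans ?_ h1
    have h2 : a' * ‖z‖ ≤ C₁ * d2 * (C₁ * K * d1) :=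
      mul_le_mul ha'ub hzb habs0 (by positivity)
    linarith
  have t4 : -(C₁ * K * d1 * (C₁ * K * d2)) ≤ z.re * z'.re + z.im * z'.im := by
    have h1 : z.re * z'.re + z.im * z'.im = ((starRingEnd ℂ) z * z').re := by
      simp [Complex.mul_re, Complex.conj_re, Complex.conj_im]
    have h2 : |((starRingEnd ℂ) z * z').re| ≤ ‖(starRingEnd ℂ) z * z'‖ :=
      Complex.abs_re_le_norm _
    have h3 : ‖(starRingEnd ℂ) z * z'‖ = ‖z‖ * ‖z'‖ := by
      rw [norm_mul, Complex.norm_conj]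
    have h4 : ‖z‖ * ‖z'‖ ≤ C₁ * K * d1 * (C₁ * K * d2) :=
      mul_le_mul hzb hz'b habs0' (by positivity)
    rw [h1]
    have := neg_abs_le (((starRingEnd ℂ) z * z').re)
    rw [h3] at h2
    linarith
  have e : (a + z.re) * (a' + z'.re) + z.im * z'.im
      = a * a' + a * z'.re + a' * z.re + (z.re * z'.re + z.im * z'.im) := by ring
  have e2 : (B ^ 2 - 2 * C₁ ^ 2 * K - C₁ ^ 2 * K ^ 2) * (d1 * d2)
      = B * d1 * (B * d2) - C₁ * d1 * (C₁ * K * d2) - C₁ * d2 * (C₁ * K * d1)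
        - C₁ * K * d1 * (C₁ * K * d2) := by ring
  rw [e, e2]
  linarith [t1, t2, t3, t4]
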